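/- Let S be a symmetric n×n real matrix, X a g×n real matrix, and Y a symmetric g×g real matrix. Consider the symmetric (n+2g)×(n+2g) block matrix M = [[S, Xᵀ, 0],[X, Y, -I],[0, -I, 0]]. Then det M = (-1)^g · det S, the number of positive eigenvalues of M (with multiplicity) equals σ₊(S) + g, and the number of negative eigenvalues of M equals σ₋(S) + g. -/

import Mathlib

open Matrix

private lemma sylvester_core' {ι κ : Type*} [Fintype ι] [Fintype κ] [DecidableEq ι] [DecidableEq κ]
    (d : ι → ℝ) (e : κ → ℝ) (Q : Matrix κ ι ℝ)
    (h : Matrix.diagonal d = Qᵀ * Matrix.diagonal e * Q) :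
    Fintype.card {i // 0 < d i} ≤ Fintype.card {j // 0 < e j} := by
  by_contra hlt
  push_neg at hlt
  classical
  let ext : ({i // 0 < d i} → ℝ) →ₗ[ℝ] (ι → ℝ) :=
    Function.ExtendByZero.linearMap ℝ Subtype.val
  let φ : ({i // 0 < d i} → ℝ) →ₗ[ℝ] ({j // 0 < e j} → ℝ) :=
    (LinearMap.funLeft ℝ ℝ Subtype.val).comp ((Matrix.mulVecLin Q).comp ext)
  have hninj : ¬ Function.Injective φ := by
    intro hinj
    have := LinearMap.finrank_le_finrank_of_injective hinj
    simp [Module.finrank_pi] at this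
    omega
  obtain ⟨c, hc0, hcne⟩ : ∃ c, φ c = 0 ∧ c ≠ 0 := by
    by_contra hco
    push_neg at hco
    exact hninj ((injective_iff_map_eq_zero' φ).mpr
      fun a => ⟨fun ha => hco a ha,
        fun ha => by rw [ha]; exact map_zero φ⟩)
  set x : ι → ℝ := Function.extend Subtype.val c 0 with hx
  set y : κ → ℝ := Q *ᵥ x with hy
  have hxval : ∀ i : {i // 0 < d i}, x i.val = c i :=
    fun i => Subtype.val_injective.extend_apply c 0 i
  have hxzero : ∀ i : ι, ¬ 0 < d i → x i = 0 := by
    intro i hi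
    rw [hx, Function.extend_apply' _ _ _ (by rintro ⟨a, rfl⟩; exact hi a.2)]
    rfl
  have hyzero : ∀ j : {j // 0 < e j}, y j.val = 0 := by
    intro j
    have := congrFun hc0 j
    simp [φ, ext, LinearMap.funLeft, Function.ExtendByZero.linearMap, hy, hx,
      Matrix.mulVecLin] at this
    exact this
  have key : x ⬝ᵥ (Matrix.diagonal d *ᵥ x) = y ⬝ᵥ (Matrix.diagonal e *ᵥ y) := by
    rw [h, hy, ← Matrix.mulVec_mulVec, ← Matrix.mulVec_mulVec, Matrix.dotProduct_mulVec x Qᵀ,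
      Matrix.vecMul_transpose]
  have hL : x ⬝ᵥ (Matrix.diagonal d *ᵥ x) = ∑ i, d i * x i ^ 2 := by
    simp only [dotProduct, mulVec_diagonal]
    exact Finset.sum_congr rfl fun i _ => by ring
  have hR : y ⬝ᵥ (Matrix.diagonal e *ᵥ y) = ∑ j, e j * y j ^ 2 := by
    simp only [dotProduct, mulVec_diagonal]
    exact Finset.sum_congr rfl fun j _ => by ring
  obtain ⟨j, hj⟩ := Function.ne_iff.mp hcne
  have hpos : 0 < ∑ i, d i * x i ^ 2 := by
    refine Finset.sum_pos' (fun i _ => ?_) ⟨j.val, Finset.mem_univ _, ?_⟩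
    · by_cases hi : 0 < d i
      · exact mul_nonneg hi.le (sq_nonneg _)
      · rw [hxzero i hi]; ring_nf; exact le_refl _
    · rw [hxval j]
      have hj' : c j ≠ 0 := by simpa using hj
      exact mul_pos j.2 (pow_pos (abs_pos.mpr hj') 2 |>.trans_eq (sq_abs _))
  have hneg : ∑ j, e j * y j ^ 2 ≤ 0 := by
    refine Finset.sum_nonpos fun j _ => ?_
    by_cases hj' : 0 < e j
    · rw [hyzero ⟨j, hj'⟩]; ring_nf; exact le_refl _
    · exact mul_nonpos_of_nonpos_of_nonneg (not_lt.mp hj') (sq_nonneg _)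
  rw [hL, hR] at key
  linarith

private lemma sylvester_core_neg' {ι κ : Type*} [Fintype ι] [Fintype κ] [DecidableEq ι]
    [DecidableEq κ] (d : ι → ℝ) (e : κ → ℝ) (Q : Matrix κ ι ℝ)
    (h : Matrix.diagonal d = Qᵀ * Matrix.diagonal e * Q) :
    Fintype.card {i // d i < 0} ≤ Fintype.card {j // e j < 0} := by
  have h' : Matrix.diagonal (fun i => -(d i)) = Qᵀ * Matrix.diagonal (fun j => -(e j)) * Q := by
    rw [← Matrix.diagonal_neg, ← Matrix.diagonal_neg, h, Matrix.mul_neg, Matrix.neg_mul]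
  have hc := sylvester_core' (fun i => -(d i)) (fun j => -(e j)) Q h'
  have e1 : Fintype.card {i // d i < 0} = Fintype.card {i // 0 < -(d i)} :=
    Fintype.card_congr (Equiv.subtypeEquivRight fun i => by simp)
  have e2 : Fintype.card {j // e j < 0} = Fintype.card {j // 0 < -(e j)} :=
    Fintype.card_congr (Equiv.subtypeEquivRight fun j => by simp)
  rw [e1, e2]; exact hc

private lemma real_spectral' {ι : Type*} [Fintype ι] [DecidableEq ι]
    (A : Matrix ι ι ℝ) (hA : A.IsHermitian) :
    A = ((hA.eigenvectorUnitary : Matrix ι ι ℝ)ᵀ)ᵀ * Matrix.diagonal hA.eigenvalues *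
      (hA.eigenvectorUnitary : Matrix ι ι ℝ)ᵀ := by
  set U : Matrix ι ι ℝ := ↑(hA.eigenvectorUnitary) with hU
  have hstarU : star U = Uᵀ := by
    rw [Matrix.star_eq_conjTranspose, Matrix.conjTranspose_eq_transpose_of_trivial]
  have hdiag : Matrix.diagonal hA.eigenvalues = star U * A * U := by
    have hcs := hA.conjStarAlgAut_star_eigenvectorUnitary
    rw [Unitary.conjStarAlgAut_star_apply] at hcs
    rw [hU, hcs]
    congr 1
  rw [Matrix.transpose_transpose, ← hstarU, hdiag]
  have hUU : U * star U = 1 := (Matrix.mem_unitaryGroup_iff).mp hA.eigenvectorUnitary.2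
  calc A = (U * star U) * A * (U * star U) := by rw [hUU]; noncomm_ring
    _ = U * (star U * A * U) * star U := by noncomm_ring

private lemma sylvester_herm' {ι : Type*} [Fintype ι] [DecidableEq ι]
    (A : Matrix ι ι ℝ) (hA : A.IsHermitian) (e : ι → ℝ) (P : Matrix ι ι ℝ) [Invertible P]
    (h : A = Pᵀ * Matrix.diagonal e * P) :
    Fintype.card {i // 0 < hA.eigenvalues i} = Fintype.card {i // 0 < e i} ∧
      Fintype.card {i // hA.eigenvalues i < 0} = Fintype.card {i // e i < 0} := by
  set U : Matrix ι ι ℝ := ↑(hA.eigenvectorUnitary) with hU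
  have hstarU : star U = Uᵀ := by
    rw [Matrix.star_eq_conjTranspose, Matrix.conjTranspose_eq_transpose_of_trivial]
  have hdiag : Matrix.diagonal hA.eigenvalues = star U * A * U := by
    have hcs := hA.conjStarAlgAut_star_eigenvectorUnitary
    rw [Unitary.conjStarAlgAut_star_apply] at hcs
    rw [hU, hcs]
    congr 1
  have h1 : Matrix.diagonal hA.eigenvalues = (P * U)ᵀ * Matrix.diagonal e * (P * U) := by
    rw [hdiag, h, Matrix.transpose_mul, hstarU]
    noncomm_ring
  haveI hPT : Invertible Pᵀ := Matrix.invertibleTranspose P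
  have hA' : A = ((Uᵀ)ᵀ) * Matrix.diagonal hA.eigenvalues * (Uᵀ) := real_spectral' A hA
  have he : Matrix.diagonal e = ⅟(Pᵀ) * A * ⅟P := by
    rw [h]
    calc Matrix.diagonal e
        = (⅟(Pᵀ) * Pᵀ) * Matrix.diagonal e * (P * ⅟P) := by
          rw [invOf_mul_self, mul_invOf_self]; noncomm_ring
      _ = ⅟(Pᵀ) * (Pᵀ * Matrix.diagonal e * P) * ⅟P := by noncomm_ring
  have h2 : Matrix.diagonal e
      = (Uᵀ * ⅟P)ᵀ * Matrix.diagonal hA.eigenvalues * (Uᵀ * ⅟P) :=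
    calc Matrix.diagonal e = ⅟(Pᵀ) * A * ⅟P := he
      _ = ⅟(Pᵀ) * ((Uᵀ)ᵀ * Matrix.diagonal hA.eigenvalues * (Uᵀ)) * ⅟P := by rw [← hA']
      _ = (Uᵀ * ⅟P)ᵀ * Matrix.diagonal hA.eigenvalues * (Uᵀ * ⅟P) := by
          rw [Matrix.transpose_mul, Matrix.transpose_invOf, Matrix.transpose_transpose]
          noncomm_ring
  exact ⟨le_antisymm (sylvester_core' _ _ _ h1) (sylvester_core' _ _ _ h2),
    le_antisymm (sylvester_core_neg' _ _ _ h1) (sylvester_core_neg' _ _ _ h2)⟩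

/-- The congruence computation used in the proof of Proposition 2.11: if `S` is a symmetric
`n × n` real matrix, `X` a `g × n` real matrix and `Y` a symmetric `g × g` real matrix, then
the symmetric block matrix `M = [[S, Xᵀ, 0], [X, Y, -I], [0, -I, 0]]` satisfies
`det M = (-1)^g · det S`, `σ₊(M) = σ₊(S) + g` and `σ₋(M) = σ₋(S) + g`. -/
theorem det_and_signature_bordered (n g : ℕ)
    (S : Matrix (Fin n) (Fin n) ℝ) (hS : S.IsHermitian)
    (X : Matrix (Fin g) (Fin n) ℝ) (Y : Matrix (Fin g) (Fin g) ℝ) (hY : Y.IsSymm)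
    (M : Matrix (Fin n ⊕ (Fin g ⊕ Fin g)) (Fin n ⊕ (Fin g ⊕ Fin g)) ℝ)
    (hMdef : M = Matrix.fromBlocks S
      (Matrix.fromCols Xᵀ 0)
      (Matrix.fromRows X 0)
      (Matrix.fromBlocks Y (-1) (-1) (0 : Matrix (Fin g) (Fin g) ℝ)))
    (hM : M.IsHermitian) :
    M.det = (-1) ^ g * S.det ∧
      Fintype.card {i // 0 < hM.eigenvalues i}
        = Fintype.card {i // 0 < hS.eigenvalues i} + g ∧
      Fintype.card {i // hM.eigenvalues i < 0}
        = Fintype.card {i // hS.eigenvalues i < 0} + g := by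
  set P : Matrix (Fin n) (Fin n) ℝ := (hS.eigenvectorUnitary : Matrix (Fin n) (Fin n) ℝ)ᵀ
    with hPdef
  have hS_spec : S = Pᵀ * Matrix.diagonal hS.eigenvalues * P := real_spectral' S hS
  haveI hPinv : Invertible P := by
    refine ⟨(hS.eigenvectorUnitary : Matrix (Fin n) (Fin n) ℝ), ?_, ?_⟩
    · have := (Matrix.mem_unitaryGroup_iff).mp hS.eigenvectorUnitary.2
      rw [hPdef]
      calc (hS.eigenvectorUnitary : Matrix (Fin n) (Fin n) ℝ) *
            (hS.eigenvectorUnitary : Matrix (Fin n) (Fin n) ℝ)ᵀ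
          = (hS.eigenvectorUnitary : Matrix (Fin n) (Fin n) ℝ) *
            star (hS.eigenvectorUnitary : Matrix (Fin n) (Fin n) ℝ) := by
            rw [Matrix.star_eq_conjTranspose, Matrix.conjTranspose_eq_transpose_of_trivial]
        _ = 1 := this
    · have := (Matrix.mem_unitaryGroup_iff').mp hS.eigenvectorUnitary.2
      rw [hPdef]
      calc (hS.eigenvectorUnitary : Matrix (Fin n) (Fin n) ℝ)ᵀ *
            (hS.eigenvectorUnitary : Matrix (Fin n) (Fin n) ℝ)
          = star (hS.eigenvectorUnitary : Matrix (Fin n) (Fin n) ℝ) *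
            (hS.eigenvectorUnitary : Matrix (Fin n) (Fin n) ℝ) := by
            rw [Matrix.star_eq_conjTranspose, Matrix.conjTranspose_eq_transpose_of_trivial]
        _ = 1 := this
  -- auxiliary block matrices
  set R : Matrix (Fin g ⊕ Fin g) (Fin g ⊕ Fin g) ℝ :=
    fromBlocks ((2⁻¹ : ℝ) • 1) ((2⁻¹ : ℝ) • 1) ((2⁻¹ : ℝ) • 1) ((-(2⁻¹ : ℝ)) • 1) with hRdef
  set E : Matrix (Fin g ⊕ Fin g) (Fin g ⊕ Fin g) ℝ :=
    fromBlocks ((-2 : ℝ) • 1) 0 0 ((2 : ℝ) • 1) with hEdef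
  set H : Matrix (Fin g ⊕ Fin g) (Fin g ⊕ Fin g) ℝ :=
    fromBlocks 0 (-1) (-1) 0 with hHdef
  have hH : H = Rᵀ * E * R := by
    rw [hHdef, hRdef, hEdef, fromBlocks_transpose, fromBlocks_multiply, fromBlocks_multiply]
    congr 1 <;> simp [Matrix.smul_mul, Matrix.mul_smul, smul_smul, transpose_smul]
    all_goals module
  set Q : Matrix (Fin n ⊕ (Fin g ⊕ Fin g)) (Fin n ⊕ (Fin g ⊕ Fin g)) ℝ :=
    fromBlocks 1 0 (fromRows 0 (-X)) (fromBlocks 1 0 ((-(2⁻¹ : ℝ)) • Y) 1) with hQdef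
  have hYt : Yᵀ = Y := hY
  have hM2 : M = Qᵀ * fromBlocks S 0 0 H * Q := by
    rw [hMdef, hQdef, hHdef, fromBlocks_transpose, fromBlocks_multiply, fromBlocks_multiply,
      Matrix.fromBlocks_inj]
    refine ⟨?_, ?_, ?_, ?_⟩
    · simp [transpose_fromRows, fromCols_mul_fromBlocks, fromCols_mul_fromRows]
    · simp [transpose_fromRows, fromBlocks_transpose, fromBlocks_multiply,
        fromCols_mul_fromBlocks, Matrix.mul_smul, Matrix.smul_mul, hYt]
    · simp [fromBlocks_transpose, fromBlocks_multiply, fromBlocks_mul_fromRows,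
        Matrix.mul_smul, Matrix.smul_mul, hYt]
    · simp [fromBlocks_transpose, fromBlocks_multiply, Matrix.mul_smul, Matrix.smul_mul,
        transpose_smul, hYt]
      module
  set f : Fin n ⊕ (Fin g ⊕ Fin g) → ℝ :=
    Sum.elim hS.eigenvalues (Sum.elim (fun _ => (-2:ℝ)) (fun _ => (2:ℝ))) with hfdef
  set W : Matrix (Fin n ⊕ (Fin g ⊕ Fin g)) (Fin n ⊕ (Fin g ⊕ Fin g)) ℝ :=
    fromBlocks P 0 0 R with hWdef
  have hdf : Matrix.diagonal f = fromBlocks (Matrix.diagonal hS.eigenvalues) 0 0 E := by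
    rw [hfdef, hEdef, Matrix.smul_one_eq_diagonal, Matrix.smul_one_eq_diagonal,
      Matrix.fromBlocks_diagonal, Matrix.fromBlocks_diagonal]
  have hN : fromBlocks S 0 0 H = Wᵀ * Matrix.diagonal f * W := by
    rw [hdf, hWdef, fromBlocks_transpose, fromBlocks_multiply, fromBlocks_multiply]
    simp only [Matrix.mul_zero, Matrix.zero_mul, Matrix.transpose_zero, add_zero, zero_add,
      Matrix.mul_zero, Matrix.zero_mul]
    rw [← hS_spec, ← hH]
  have hMW : M = (W * Q)ᵀ * Matrix.diagonal f * (W * Q) := by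
    rw [hM2, hN, Matrix.transpose_mul]
    noncomm_ring
  -- invertibility
  haveI hRinv : Invertible R := by
    have hRR : R * R = (2⁻¹ : ℝ) • 1 := by
      rw [hRdef, fromBlocks_multiply]
      rw [show ((2⁻¹ : ℝ) • (1 : Matrix (Fin g ⊕ Fin g) (Fin g ⊕ Fin g) ℝ))
          = fromBlocks ((2⁻¹ : ℝ) • 1) 0 0 ((2⁻¹ : ℝ) • 1) by
        rw [← fromBlocks_one, fromBlocks_smul, smul_zero]]
      rw [Matrix.fromBlocks_inj]
      refine ⟨?_, ?_, ?_, ?_⟩ <;> simp [Matrix.smul_mul, Matrix.mul_smul, smul_smul] <;> module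
    refine ⟨(2 : ℝ) • R, ?_, ?_⟩
    · rw [Matrix.smul_mul, hRR, smul_smul]; norm_num
    · rw [Matrix.mul_smul, hRR, smul_smul]; norm_num
  haveI : Invertible (1 : Matrix (Fin g) (Fin g) ℝ) := invertibleOne
  haveI : Invertible (1 : Matrix (Fin n) (Fin n) ℝ) := invertibleOne
  haveI hQdinv : Invertible (fromBlocks 1 0 ((-(2⁻¹ : ℝ)) • Y)
      (1 : Matrix (Fin g) (Fin g) ℝ)) :=
    Matrix.fromBlocksZero₁₂Invertible (1 : Matrix (Fin g) (Fin g) ℝ) ((-(2⁻¹ : ℝ)) • Y)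
      (1 : Matrix (Fin g) (Fin g) ℝ)
  haveI hQinv : Invertible Q := by
    rw [hQdef]
    exact Matrix.fromBlocksZero₁₂Invertible (1 : Matrix (Fin n) (Fin n) ℝ) (fromRows 0 (-X))
      (fromBlocks 1 0 ((-(2⁻¹ : ℝ)) • Y) 1)
  haveI hWinv : Invertible W := by
    rw [hWdef]
    exact Matrix.fromBlocksZero₁₂Invertible P (0 : Matrix (Fin g ⊕ Fin g) (Fin n) ℝ) R
  haveI hWQinv : Invertible (W * Q) := invertibleMul W Q
  -- signature
  obtain ⟨hpos, hneg⟩ := sylvester_herm' M hM f (W * Q) hMW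
  -- counting
  have hcpos : Fintype.card {i // 0 < f i} = Fintype.card {i // 0 < hS.eigenvalues i} + g := by
    rw [hfdef, Fintype.card_congr (Equiv.subtypeSum), Fintype.card_sum,
      Fintype.card_congr (Equiv.subtypeSum (p := fun b => 0 < Sum.elim _ _ (Sum.inr b))),
      Fintype.card_sum]
    have h1 : Fintype.card {a : Fin g // (0:ℝ) < -2} = 0 := by
      haveI : IsEmpty {a : Fin g // (0:ℝ) < -2} := ⟨fun x => by have := x.2; norm_num at this⟩
      exact Fintype.card_eq_zero
    have h2 : Fintype.card {a : Fin g // (0:ℝ) < 2} = g := by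
      rw [Fintype.card_congr (Equiv.subtypeUnivEquiv (fun _ => by norm_num))]
      exact Fintype.card_fin g
    change Fintype.card {a : Fin n // 0 < hS.eigenvalues a} + (Fintype.card {a : Fin g // (0:ℝ) < -2}
      + Fintype.card {a : Fin g // (0:ℝ) < 2}) = Fintype.card {i // 0 < hS.eigenvalues i} + g
    rw [h1, h2]
    omega
  have hcneg : Fintype.card {i // f i < 0} = Fintype.card {i // hS.eigenvalues i < 0} + g := by
    rw [hfdef, Fintype.card_congr (Equiv.subtypeSum), Fintype.card_sum,
      Fintype.card_congr (Equiv.subtypeSum (p := fun b => Sum.elim _ _ (Sum.inr b) < 0)),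
      Fintype.card_sum]
    have h1 : Fintype.card {a : Fin g // (2:ℝ) < 0} = 0 := by
      haveI : IsEmpty {a : Fin g // (2:ℝ) < 0} := ⟨fun x => by have := x.2; norm_num at this⟩
      exact Fintype.card_eq_zero
    have h2 : Fintype.card {a : Fin g // (-2:ℝ) < 0} = g := by
      rw [Fintype.card_congr (Equiv.subtypeUnivEquiv (fun _ => by norm_num))]
      exact Fintype.card_fin g
    change Fintype.card {a : Fin n // hS.eigenvalues a < 0} + (Fintype.card {a : Fin g // (-2:ℝ) < 0}
      + Fintype.card {a : Fin g // (2:ℝ) < 0}) = Fintype.card {i // hS.eigenvalues i < 0} + g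
    rw [h1, h2]
    omega
  -- determinant
  have hdetQ : Q.det = 1 := by
    rw [hQdef, det_fromBlocks_zero₁₂, det_fromBlocks_zero₁₂]
    simp
  have hdetH : H.det = (-1) ^ g := by
    have hRR : R * R = (2⁻¹ : ℝ) • 1 := by
      rw [hRdef, fromBlocks_multiply]
      rw [show ((2⁻¹ : ℝ) • (1 : Matrix (Fin g ⊕ Fin g) (Fin g ⊕ Fin g) ℝ))
          = fromBlocks ((2⁻¹ : ℝ) • 1) 0 0 ((2⁻¹ : ℝ) • 1) by
        rw [← fromBlocks_one, fromBlocks_smul, smul_zero]]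
      rw [Matrix.fromBlocks_inj]
      refine ⟨?_, ?_, ?_, ?_⟩ <;> simp [Matrix.smul_mul, Matrix.mul_smul, smul_smul] <;> module
    have hdetRR : R.det * R.det = (2⁻¹ : ℝ) ^ (2 * g) := by
      rw [← det_mul, hRR, det_smul, det_one, Fintype.card_sum, Fintype.card_fin, mul_one, two_mul]
    have hdetE : E.det = (-2 : ℝ) ^ g * (2 : ℝ) ^ g := by
      rw [hEdef, det_fromBlocks_zero₂₁, det_smul, det_smul, det_one, Fintype.card_fin]
      ring
    rw [hH, det_mul, det_mul, det_transpose]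
    calc R.det * E.det * R.det = (R.det * R.det) * E.det := by ring
      _ = (2⁻¹ : ℝ) ^ (2 * g) * ((-2 : ℝ) ^ g * (2 : ℝ) ^ g) := by rw [hdetRR, hdetE]
      _ = (-1) ^ g := by
          rw [pow_mul, ← mul_assoc, ← mul_pow, ← mul_pow]
          norm_num
  have hdet : M.det = (-1) ^ g * S.det := by
    rw [hM2, det_mul, det_mul, det_transpose, hdetQ, det_fromBlocks_zero₂₁, hdetH]
    ring
  exact ⟨hdet, hpos.trans hcpos, hneg.trans hcneg⟩
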